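/- Let α ∈ (0,1), T > 0, let u ∈ C¹([0,T];ℝ), and let H ∈ C¹(ℝ) be convex. Then for every t ∈ (0,T], the convexity inequality for the Caputo fractional derivative holds: H'(u(t)) · ∂_t^α(u − u(0))(t) ≥ ∂_t^α(H(u) − H(u(0)))(t), where u − u(0) denotes the function s ↦ u(s) − u(0) and H(u) − H(u(0)) denotes s ↦ H(u(s)) − H(u(0)). -/

import Mathlib

open MeasureTheory Set
open scoped Interval

/-- The standard kernel `g_β(t) = t^(β-1)/Γ(β)`. -/
noncomputable def stdKernel (β t : ℝ) : ℝ := t ^ (β - 1) / Real.Gamma β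

namespace CaputoAux

lemma kernel_nonneg {β x : ℝ} (hβ : 0 < β) (hx : 0 ≤ x) : 0 ≤ stdKernel β x :=
  div_nonneg (Real.rpow_nonneg hx _) (Real.Gamma_pos_of_pos hβ).le

lemma kernel_intervalIntegrable {β : ℝ} (hβ : 0 < β) (a b : ℝ) :
    IntervalIntegrable (stdKernel β) volume a b :=
  (intervalIntegral.intervalIntegrable_rpow' (by linarith)).div_const _

lemma kernel_measurable (β : ℝ) : Measurable (stdKernel β) :=
  (measurable_id.pow measurable_const).div_const _

lemma kernel_comp_sub_intervalIntegrable {β : ℝ} (hβ : 0 < β) (c a b : ℝ) :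
    IntervalIntegrable (fun x => stdKernel β (c - x)) volume a b := by
  have h := (kernel_intervalIntegrable hβ (c - a) (c - b)).comp_sub_left c
  simpa using h

lemma kernel_integral {β : ℝ} (hβ : 0 < β) (c : ℝ) :
    ∫ x in (0:ℝ)..c, stdKernel β x = c ^ β / (β * Real.Gamma β) := by
  unfold stdKernel
  rw [intervalIntegral.integral_div, integral_rpow (Or.inl (by linarith))]
  rw [Real.zero_rpow (by linarith : β - 1 + 1 ≠ 0)]
  rw [show β - 1 + 1 = β by ring, div_div]
  ring_nf

lemma kernel_conv_Ioc {β : ℝ} (hβ0 : 0 < β) {a b : ℝ} (hab : a ≤ b) :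
    ∫ s in Ioc a b, stdKernel β (b - s) = (b - a) ^ β / (β * Real.Gamma β) := by
  rw [← intervalIntegral.integral_of_le hab]
  have hc := intervalIntegral.integral_comp_sub_left (a := a) (b := b) (stdKernel β) b
  rw [hc]
  simp only [sub_self]
  exact kernel_integral hβ0 (b - a)

lemma kernel_conv_Icc {β : ℝ} (hβ0 : 0 < β) {a b : ℝ} (hab : a ≤ b) :
    ∫ s in Icc a b, stdKernel β (b - s) = (b - a) ^ β / (β * Real.Gamma β) := by
  rw [integral_Icc_eq_integral_Ioc]
  exact kernel_conv_Ioc hβ0 hab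

lemma kernel_conv_Icc_right {β : ℝ} (hβ0 : 0 < β) {a b : ℝ} (hab : a ≤ b) :
    ∫ s in Icc a b, stdKernel β (s - a) = (b - a) ^ β / (β * Real.Gamma β) := by
  rw [integral_Icc_eq_integral_Ioc, ← intervalIntegral.integral_of_le hab]
  have hc := intervalIntegral.integral_comp_sub_right (a := a) (b := b) (stdKernel β) a
  rw [hc]
  simp only [sub_self]
  exact kernel_integral hβ0 (b - a)

/-- Fubini, first form. -/
lemma fubini_one {β T : ℝ} (hβ0 : 0 < β) (v : ℝ → ℝ) (hv : Continuous v)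
    {τ : ℝ} (hτ : τ ∈ Icc 0 T) :
    (∫ s in Ioc (0:ℝ) τ, stdKernel β (τ - s) * ∫ r in Ioc (0:ℝ) s, v r)
      = ∫ r in Ioc (0:ℝ) τ, ((τ - r) ^ β / (β * Real.Gamma β)) * v r := by
  set μ := volume.restrict (Ioc (0:ℝ) τ) with hμ
  set S : Set (ℝ × ℝ) := {q : ℝ × ℝ | q.2 ≤ q.1} with hSdef
  have hS : MeasurableSet S := measurableSet_le measurable_snd measurable_fst
  set f : ℝ × ℝ → ℝ :=
    fun p => S.indicator (fun q => stdKernel β (τ - q.1) * v q.2) p with hfdef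
  have hfm : Measurable f :=
    ((((kernel_measurable β).comp (measurable_const.sub measurable_fst)).mul
      (hv.measurable.comp measurable_snd)).indicator hS)
  have hfae : AEStronglyMeasurable f (μ.prod μ) := hfm.aestronglyMeasurable
  have hrow : ∀ s : ℝ, (fun r => f (s, r))
      = (Iic s).indicator (fun r => stdKernel β (τ - s) * v r) := by
    intro s; funext r
    by_cases h : r ≤ s
    · simp only [hfdef]
      rw [indicator_of_mem (show (s,r) ∈ S from h), indicator_of_mem (mem_Iic.mpr h)]
    · simp only [hfdef]
      rw [indicator_of_notMem (show (s,r) ∉ S from h),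
        indicator_of_notMem (fun hh => h (mem_Iic.mp hh))]
  have hcol : ∀ r : ℝ, (fun s => f (s, r))
      = (Ici r).indicator (fun s => stdKernel β (τ - s) * v r) := by
    intro r; funext s
    by_cases h : r ≤ s
    · simp only [hfdef]
      rw [indicator_of_mem (show (s,r) ∈ S from h), indicator_of_mem (mem_Ici.mpr h)]
    · simp only [hfdef]
      rw [indicator_of_notMem (show (s,r) ∉ S from h),
        indicator_of_notMem (fun hh => h (mem_Ici.mp hh))]
  have hmeq : ∀ s ∈ Ioc (0:ℝ) τ, μ.restrict (Iic s) = volume.restrict (Ioc (0:ℝ) s) := by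
    intro s hs
    rw [hμ, Measure.restrict_restrict measurableSet_Iic, inter_comm, Ioc_inter_Iic,
      min_eq_right hs.2]
  have hrowint : ∀ s ∈ Ioc (0:ℝ) τ,
      ∫ r, f (s, r) ∂μ = stdKernel β (τ - s) * ∫ r in Ioc (0:ℝ) s, v r := by
    intro s hs
    rw [hrow s, integral_indicator measurableSet_Iic, hmeq s hs, integral_const_mul]
  have hrowInt : ∀ s ∈ Ioc (0:ℝ) τ, Integrable (fun r => f (s, r)) μ := by
    intro s hs
    rw [hrow s]
    refine (integrable_indicator_iff measurableSet_Iic).mpr ?_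
    have : Integrable (fun r => stdKernel β (τ - s) * v r) (μ.restrict (Iic s)) := by
      rw [hmeq s hs]
      exact (continuous_const.mul hv).integrableOn_Ioc
    exact this
  have hint : Integrable f (μ.prod μ) := by
    refine (integrable_prod_iff hfae).mpr ⟨?_, ?_⟩
    · filter_upwards [ae_restrict_mem measurableSet_Ioc] with s hs
      exact hrowInt s hs
    · set Cv : ℝ := ∫ r in Ioc (0:ℝ) τ, |v r| with hCv
      have hCv0 : 0 ≤ Cv := integral_nonneg (fun r => abs_nonneg _)
      apply Integrable.mono' (g := fun s => stdKernel β (τ - s) * Cv)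
      · have : IntervalIntegrable (fun s => stdKernel β (τ - s) * Cv) volume 0 τ :=
          (kernel_comp_sub_intervalIntegrable hβ0 τ 0 τ).mul_const Cv
        exact (intervalIntegrable_iff_integrableOn_Ioc_of_le hτ.1).mp this
      · exact hfae.norm.integral_prod_right'
      · filter_upwards [ae_restrict_mem measurableSet_Ioc] with s hs
        have hg0 : 0 ≤ stdKernel β (τ - s) := kernel_nonneg hβ0 (by linarith [hs.2])
        rw [Real.norm_eq_abs, abs_of_nonneg (integral_nonneg (fun r => norm_nonneg _))]
        have hmono : (fun r => ‖f (s, r)‖) ≤ fun r => stdKernel β (τ - s) * |v r| := by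
          intro r
          show ‖f (s, r)‖ ≤ stdKernel β (τ - s) * |v r|
          rw [show f (s, r) = (Iic s).indicator (fun r => stdKernel β (τ - s) * v r) r from
            congrFun (hrow s) r]
          refine le_trans (norm_indicator_le_norm_self _ r) ?_
          rw [Real.norm_eq_abs, abs_mul, abs_of_nonneg hg0]
        calc ∫ r, ‖f (s, r)‖ ∂μ ≤ ∫ r, stdKernel β (τ - s) * |v r| ∂μ := by
              refine integral_mono ((hrowInt s hs).norm) ?_ hmono
              exact (continuous_const.mul hv.abs).integrableOn_Ioc
          _ = stdKernel β (τ - s) * Cv := by rw [integral_const_mul]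
  have hcolint : ∀ r ∈ Ioc (0:ℝ) τ,
      ∫ s, f (s, r) ∂μ = ((τ - r) ^ β / (β * Real.Gamma β)) * v r := by
    intro r hr
    have hmeq2 : μ.restrict (Ici r) = volume.restrict (Icc r τ) := by
      rw [hμ, Measure.restrict_restrict measurableSet_Ici]
      congr 1
      ext x
      simp only [mem_inter_iff, mem_Ioc, mem_Ici, mem_Icc]
      constructor
      · rintro ⟨h3, _, h2⟩; exact ⟨h3, h2⟩
      · rintro ⟨h1, h2⟩; exact ⟨h1, lt_of_lt_of_le hr.1 h1, h2⟩
    rw [hcol r, integral_indicator measurableSet_Ici, hmeq2, integral_mul_const,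
      kernel_conv_Icc hβ0 hr.2]
  calc (∫ s in Ioc (0:ℝ) τ, stdKernel β (τ - s) * ∫ r in Ioc (0:ℝ) s, v r)
      = ∫ s, (∫ r, f (s, r) ∂μ) ∂μ := by
        refine integral_congr_ae ?_
        filter_upwards [ae_restrict_mem measurableSet_Ioc] with s hs
        exact (hrowint s hs).symm
    _ = ∫ r, (∫ s, f (s, r) ∂μ) ∂μ := integral_integral_swap hint
    _ = ∫ r in Ioc (0:ℝ) τ, ((τ - r) ^ β / (β * Real.Gamma β)) * v r := by
        refine integral_congr_ae ?_
        filter_upwards [ae_restrict_mem measurableSet_Ioc] with r hr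
        exact hcolint r hr

/-- Fubini, second form. -/
lemma fubini_two {β T : ℝ} (hβ0 : 0 < β) (v : ℝ → ℝ) (hv : Continuous v)
    {τ : ℝ} (hτ : τ ∈ Icc 0 T) :
    (∫ σ in Ioc (0:ℝ) τ, ∫ s in Ioc (0:ℝ) σ, stdKernel β (σ - s) * v s)
      = ∫ r in Ioc (0:ℝ) τ, ((τ - r) ^ β / (β * Real.Gamma β)) * v r := by
  set μ := volume.restrict (Ioc (0:ℝ) τ) with hμ
  set S : Set (ℝ × ℝ) := {q : ℝ × ℝ | q.2 ≤ q.1} with hSdef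
  have hS : MeasurableSet S := measurableSet_le measurable_snd measurable_fst
  set f : ℝ × ℝ → ℝ :=
    fun p => S.indicator (fun q => stdKernel β (q.1 - q.2) * v q.2) p with hfdef
  have hfm : Measurable f :=
    ((((kernel_measurable β).comp (measurable_fst.sub measurable_snd)).mul
      (hv.measurable.comp measurable_snd)).indicator hS)
  have hfae : AEStronglyMeasurable f (μ.prod μ) := hfm.aestronglyMeasurable
  have hrow : ∀ σ : ℝ, (fun r => f (σ, r))
      = (Iic σ).indicator (fun r => stdKernel β (σ - r) * v r) := by
    intro σ; funext r
    by_cases h : r ≤ σ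
    · simp only [hfdef]
      rw [indicator_of_mem (show (σ,r) ∈ S from h), indicator_of_mem (mem_Iic.mpr h)]
    · simp only [hfdef]
      rw [indicator_of_notMem (show (σ,r) ∉ S from h),
        indicator_of_notMem (fun hh => h (mem_Iic.mp hh))]
  have hcol : ∀ r : ℝ, (fun σ => f (σ, r))
      = (Ici r).indicator (fun σ => stdKernel β (σ - r) * v r) := by
    intro r; funext σ
    by_cases h : r ≤ σ
    · simp only [hfdef]
      rw [indicator_of_mem (show (σ,r) ∈ S from h), indicator_of_mem (mem_Ici.mpr h)]
    · simp only [hfdef]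
      rw [indicator_of_notMem (show (σ,r) ∉ S from h),
        indicator_of_notMem (fun hh => h (mem_Ici.mp hh))]
  have hmeq : ∀ σ ∈ Ioc (0:ℝ) τ, μ.restrict (Iic σ) = volume.restrict (Ioc (0:ℝ) σ) := by
    intro σ hσ
    rw [hμ, Measure.restrict_restrict measurableSet_Iic, inter_comm, Ioc_inter_Iic,
      min_eq_right hσ.2]
  have hrowint : ∀ σ ∈ Ioc (0:ℝ) τ,
      ∫ r, f (σ, r) ∂μ = ∫ s in Ioc (0:ℝ) σ, stdKernel β (σ - s) * v s := by
    intro σ hσ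
    rw [hrow σ, integral_indicator measurableSet_Iic, hmeq σ hσ]
  have hrowInt : ∀ σ ∈ Ioc (0:ℝ) τ, Integrable (fun r => f (σ, r)) μ := by
    intro σ hσ
    rw [hrow σ]
    refine (integrable_indicator_iff measurableSet_Iic).mpr ?_
    have : Integrable (fun r => stdKernel β (σ - r) * v r) (μ.restrict (Iic σ)) := by
      rw [hmeq σ hσ]
      exact (intervalIntegrable_iff_integrableOn_Ioc_of_le hσ.1.le).mp
        ((kernel_comp_sub_intervalIntegrable hβ0 σ 0 σ).mul_continuousOn hv.continuousOn)
    exact this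
  obtain ⟨Mv, hMv⟩ := isCompact_Icc.exists_bound_of_continuousOn
    (hv.continuousOn : ContinuousOn v (Icc 0 τ))
  have hMv0 : 0 ≤ Mv := le_trans (norm_nonneg (v 0)) (hMv 0 ⟨le_rfl, hτ.1⟩)
  have hΓ : 0 < β * Real.Gamma β := mul_pos hβ0 (Real.Gamma_pos_of_pos hβ0)
  have hint : Integrable f (μ.prod μ) := by
    refine (integrable_prod_iff hfae).mpr ⟨?_, ?_⟩
    · filter_upwards [ae_restrict_mem measurableSet_Ioc] with σ hσ
      exact hrowInt σ hσ
    · apply Integrable.mono' (g := fun _ => τ ^ β / (β * Real.Gamma β) * Mv)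
      · exact (integrableOn_const_iff).mpr (Or.inr measure_Ioc_lt_top)
      · exact hfae.norm.integral_prod_right'
      · filter_upwards [ae_restrict_mem measurableSet_Ioc] with σ hσ
        rw [Real.norm_eq_abs, abs_of_nonneg (integral_nonneg (fun r => norm_nonneg _))]
        have heqn : (fun r => ‖f (σ, r)‖)
            = (Iic σ).indicator (fun r => ‖stdKernel β (σ - r) * v r‖) := by
          funext r
          rw [congrFun (hrow σ) r, norm_indicator_eq_indicator_norm]
        have hfint : IntegrableOn (fun r => ‖stdKernel β (σ - r) * v r‖) (Ioc 0 σ) volume :=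
          (intervalIntegrable_iff_integrableOn_Ioc_of_le hσ.1.le).mp
            ((kernel_comp_sub_intervalIntegrable hβ0 σ 0 σ).mul_continuousOn
              hv.continuousOn).norm
        have hgint : IntegrableOn (fun r => stdKernel β (σ - r) * Mv) (Ioc 0 σ) volume :=
          (intervalIntegrable_iff_integrableOn_Ioc_of_le hσ.1.le).mp
            ((kernel_comp_sub_intervalIntegrable hβ0 σ 0 σ).mul_const Mv)
        calc ∫ r, ‖f (σ, r)‖ ∂μ
            = ∫ r in Ioc (0:ℝ) σ, ‖stdKernel β (σ - r) * v r‖ := by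
              rw [heqn, integral_indicator measurableSet_Iic, hmeq σ hσ]
          _ ≤ ∫ r in Ioc (0:ℝ) σ, stdKernel β (σ - r) * Mv := by
              refine setIntegral_mono_on hfint hgint measurableSet_Ioc ?_
              intro r hr
              have hg0 : 0 ≤ stdKernel β (σ - r) := kernel_nonneg hβ0 (by linarith [hr.2])
              rw [Real.norm_eq_abs, abs_mul, abs_of_nonneg hg0]
              exact mul_le_mul_of_nonneg_left
                (by simpa [Real.norm_eq_abs] using hMv r ⟨hr.1.le, le_trans hr.2 hσ.2⟩) hg0
          _ = σ ^ β / (β * Real.Gamma β) * Mv := by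
              rw [integral_mul_const, kernel_conv_Ioc hβ0 hσ.1.le, sub_zero]
          _ ≤ τ ^ β / (β * Real.Gamma β) * Mv :=
              mul_le_mul_of_nonneg_right
                (div_le_div_of_nonneg_right
                  (Real.rpow_le_rpow hσ.1.le hσ.2 hβ0.le) hΓ.le) hMv0
  have hcolint : ∀ r ∈ Ioc (0:ℝ) τ,
      ∫ σ, f (σ, r) ∂μ = ((τ - r) ^ β / (β * Real.Gamma β)) * v r := by
    intro r hr
    have hmeq2 : μ.restrict (Ici r) = volume.restrict (Icc r τ) := by
      rw [hμ, Measure.restrict_restrict measurableSet_Ici]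
      congr 1
      ext x
      simp only [mem_inter_iff, mem_Ioc, mem_Ici, mem_Icc]
      constructor
      · rintro ⟨h3, _, h2⟩; exact ⟨h3, h2⟩
      · rintro ⟨h1, h2⟩; exact ⟨h1, lt_of_lt_of_le hr.1 h1, h2⟩
    rw [hcol r, integral_indicator measurableSet_Ici, hmeq2, integral_mul_const,
      kernel_conv_Icc_right hβ0 hr.2]
  calc (∫ σ in Ioc (0:ℝ) τ, ∫ s in Ioc (0:ℝ) σ, stdKernel β (σ - s) * v s)
      = ∫ σ, (∫ r, f (σ, r) ∂μ) ∂μ := by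
        refine integral_congr_ae ?_
        filter_upwards [ae_restrict_mem measurableSet_Ioc] with σ hσ
        exact (hrowint σ hσ).symm
    _ = ∫ r, (∫ σ, f (σ, r) ∂μ) ∂μ := integral_integral_swap hint
    _ = ∫ r in Ioc (0:ℝ) τ, ((τ - r) ^ β / (β * Real.Gamma β)) * v r := by
        refine integral_congr_ae ?_
        filter_upwards [ae_restrict_mem measurableSet_Ioc] with r hr
        exact hcolint r hr

lemma convD_continuousOn {β T : ℝ} (hβ0 : 0 < β) (hT : 0 < T) (v : ℝ → ℝ)
    (hv : Continuous v) :
    ContinuousOn (fun σ => ∫ s in (0:ℝ)..σ, stdKernel β (σ - s) * v s) (Icc 0 T) := by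
  obtain ⟨M, hM⟩ := isCompact_Icc.exists_bound_of_continuousOn
    (hv.continuousOn : ContinuousOn v (Icc (-T) T))
  have hM0 : 0 ≤ M := le_trans (norm_nonneg (v 0)) (hM 0 ⟨by linarith, hT.le⟩)
  set F : ℝ → ℝ → ℝ := fun σ x => (Ioc 0 σ).indicator (fun x => stdKernel β x * v (σ - x)) x
    with hFdef
  have keyeq : ∀ σ ∈ Icc (0:ℝ) T,
      (∫ s in (0:ℝ)..σ, stdKernel β (σ - s) * v s) = ∫ x in Ioc (0:ℝ) T, F σ x := by
    intro σ hσ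
    have hc := intervalIntegral.integral_comp_sub_left (a := (0:ℝ)) (b := σ)
      (fun x => stdKernel β x * v (σ - x)) σ
    simp only [sub_self, sub_zero] at hc
    calc ∫ s in (0:ℝ)..σ, stdKernel β (σ - s) * v s
        = ∫ x in (0:ℝ)..σ, stdKernel β x * v (σ - x) := by
          rw [← hc]
          apply intervalIntegral.integral_congr
          intro s _
          simp only [sub_sub_cancel]
      _ = ∫ x in Ioc (0:ℝ) σ, stdKernel β x * v (σ - x) :=
          intervalIntegral.integral_of_le hσ.1
      _ = ∫ x in Ioc (0:ℝ) T, F σ x := by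
          rw [hFdef]
          rw [integral_indicator measurableSet_Ioc, Measure.restrict_restrict measurableSet_Ioc,
            inter_eq_left.mpr (Ioc_subset_Ioc le_rfl hσ.2)]
  intro σ₀ hσ₀
  have hmain : ContinuousWithinAt (fun σ => ∫ x in Ioc (0:ℝ) T, F σ x) (Icc 0 T) σ₀ := by
    apply continuousWithinAt_of_dominated (bound := fun x => stdKernel β x * M)
    · refine Filter.Eventually.of_forall (fun σ => ?_)
      exact (((kernel_measurable β).aestronglyMeasurable).mul
        ((hv.comp (continuous_const.sub continuous_id)).aestronglyMeasurable)).indicator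
        measurableSet_Ioc
    · filter_upwards [self_mem_nhdsWithin] with σ hσ
      filter_upwards [ae_restrict_mem measurableSet_Ioc] with x hx
      by_cases hx' : x ∈ Ioc 0 σ
      · rw [hFdef]
        simp only [indicator_of_mem hx']
        rw [Real.norm_eq_abs, abs_mul,
          abs_of_nonneg (kernel_nonneg hβ0 hx'.1.le)]
        apply mul_le_mul_of_nonneg_left _ (kernel_nonneg hβ0 hx'.1.le)
        have : σ - x ∈ Icc (-T) T := ⟨by linarith [hx'.2, hσ.1, hx.2], by linarith [hx'.1, hσ.2]⟩
        simpa [Real.norm_eq_abs] using hM _ this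
      · rw [hFdef]
        simp only [indicator_of_notMem hx']
        simp only [norm_zero]
        exact mul_nonneg (kernel_nonneg hβ0 hx.1.le) hM0
    · rw [← IntegrableOn]
      exact (intervalIntegrable_iff_integrableOn_Ioc_of_le hT.le).mp
        ((kernel_intervalIntegrable hβ0 0 T).mul_const M)
    · have hne : ∀ᵐ x ∂(volume.restrict (Ioc (0:ℝ) T)), x ≠ σ₀ := by
        refine ae_restrict_of_ae ?_
        rw [ae_iff]
        have : {x : ℝ | ¬ x ≠ σ₀} = {σ₀} := by ext y; simp
        rw [this]
        exact measure_singleton σ₀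
      filter_upwards [ae_restrict_mem measurableSet_Ioc, hne] with x hx hxne
      rcases lt_or_gt_of_ne hxne with hlt | hgt
      · -- x < σ₀ : eventually F σ x = stdKernel β x * v (σ - x)
        have hev : (fun σ => F σ x) =ᶠ[nhdsWithin σ₀ (Icc 0 T)] fun σ => stdKernel β x * v (σ - x) := by
          filter_upwards [nhdsWithin_le_nhds (Ioi_mem_nhds hlt)] with σ hσ
          rw [hFdef]
          exact indicator_of_mem (mem_Ioc.mpr ⟨hx.1, le_of_lt hσ⟩) _
        have hcont : ContinuousWithinAt (fun σ => stdKernel β x * v (σ - x)) (Icc 0 T) σ₀ :=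
          (continuous_const.mul (hv.comp (continuous_id.sub continuous_const))).continuousWithinAt
        apply hcont.congr_of_eventuallyEq hev
        rw [hFdef]
        exact indicator_of_mem (mem_Ioc.mpr ⟨hx.1, hlt.le⟩) _
      · -- σ₀ < x : eventually F σ x = 0
        have hev : (fun σ => F σ x) =ᶠ[nhdsWithin σ₀ (Icc 0 T)] fun _ => (0:ℝ) := by
          filter_upwards [nhdsWithin_le_nhds (Iio_mem_nhds hgt)] with σ hσ
          rw [hFdef]
          exact indicator_of_notMem (fun h => absurd h.2 (not_le.mpr hσ)) _
        apply continuousWithinAt_const.congr_of_eventuallyEq hev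
        rw [hFdef]
        exact indicator_of_notMem (fun h => absurd h.2 (not_le.mpr hgt)) _
  exact hmain.congr keyeq (keyeq σ₀ hσ₀)


lemma lemA {β T : ℝ} (hβ0 : 0 < β) (hT : 0 < T) (v : ℝ → ℝ) (hv : Continuous v)
    {t : ℝ} (ht : t ∈ Ioc (0:ℝ) T) :
    HasDerivWithinAt (fun τ => ∫ s in (0:ℝ)..τ, stdKernel β (τ - s) * ∫ r in (0:ℝ)..s, v r)
      (∫ s in (0:ℝ)..t, stdKernel β (t - s) * v s) (Icc 0 T) t := by
  set D : ℝ → ℝ := fun σ => ∫ s in (0:ℝ)..σ, stdKernel β (σ - s) * v s with hD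
  have hDc : ContinuousOn D (Icc 0 T) := convD_continuousOn hβ0 hT v hv
  have htmem : t ∈ Icc (0:ℝ) T := ⟨ht.1.le, ht.2⟩
  haveI : Fact (t ∈ Icc (0:ℝ) T) := ⟨htmem⟩
  have hprim : HasDerivWithinAt (fun τ => ∫ σ in (0:ℝ)..τ, D σ) (D t) (Icc 0 T) t := by
    apply intervalIntegral.integral_hasDerivWithinAt_right
    · refine (hDc.mono ?_).intervalIntegrable
      rw [uIcc_of_le ht.1.le]
      exact Icc_subset_Icc le_rfl ht.2
    · exact ⟨Icc 0 T, self_mem_nhdsWithin, hDc.aestronglyMeasurable measurableSet_Icc⟩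
    · exact hDc t htmem
  have heq : ∀ τ ∈ Icc (0:ℝ) T,
      (∫ s in (0:ℝ)..τ, stdKernel β (τ - s) * ∫ r in (0:ℝ)..s, v r)
        = ∫ σ in (0:ℝ)..τ, D σ := by
    intro τ hτ
    rw [intervalIntegral.integral_of_le hτ.1, intervalIntegral.integral_of_le hτ.1]
    have h1 : EqOn (fun s => stdKernel β (τ - s) * ∫ r in (0:ℝ)..s, v r)
        (fun s => stdKernel β (τ - s) * ∫ r in Ioc (0:ℝ) s, v r) (Ioc 0 τ) := by
      intro s hs
      simp only
      rw [intervalIntegral.integral_of_le hs.1.le]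
    have h2 : EqOn (fun σ => ∫ s in Ioc (0:ℝ) σ, stdKernel β (σ - s) * v s) D (Ioc 0 τ) := by
      intro σ hσ
      simp only [hD]
      rw [intervalIntegral.integral_of_le hσ.1.le]
    calc ∫ s in Ioc (0:ℝ) τ, stdKernel β (τ - s) * ∫ r in (0:ℝ)..s, v r
        = ∫ s in Ioc (0:ℝ) τ, stdKernel β (τ - s) * ∫ r in Ioc (0:ℝ) s, v r :=
          setIntegral_congr_fun measurableSet_Ioc h1
      _ = ∫ r in Ioc (0:ℝ) τ, ((τ - r) ^ β / (β * Real.Gamma β)) * v r :=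
          fubini_one (T := T) hβ0 v hv hτ
      _ = ∫ σ in Ioc (0:ℝ) τ, ∫ s in Ioc (0:ℝ) σ, stdKernel β (σ - s) * v s :=
          (fubini_two (T := T) hβ0 v hv hτ).symm
      _ = ∫ σ in Ioc (0:ℝ) τ, D σ := setIntegral_congr_fun measurableSet_Ioc h2
  exact hprim.congr heq (heq t htmem)

lemma key_pos (α t : ℝ) (hα : α ∈ Ioo (0:ℝ) 1) (ht : 0 < t) (F F' : ℝ → ℝ)
    (hF : ∀ s ∈ Icc 0 t, HasDerivWithinAt F (F' s) (Icc 0 t) s)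
    (hF'c : ContinuousOn F' (Icc 0 t))
    (hFle : ∀ s ∈ Icc 0 t, F s ≤ 0) (hFt : F t = 0) :
    0 ≤ ∫ s in (0:ℝ)..t, stdKernel (1 - α) (t - s) * F' s := by
  set β := 1 - α with hβdef
  have hβ0 : 0 < β := by simp only [hβdef]; linarith [hα.2]
  have hβ1 : β < 1 := by simp only [hβdef]; linarith [hα.1]
  have hΓ : 0 < Real.Gamma β := Real.Gamma_pos_of_pos hβ0
  obtain ⟨M, hM⟩ := isCompact_Icc.exists_bound_of_continuousOn hF'c
  have hM0 : 0 ≤ M := le_trans (norm_nonneg _) (hM 0 ⟨le_refl _, ht.le⟩)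
  -- integrability of the integrand on subintervals of [0,t]
  have hInt : ∀ a b : ℝ, Set.uIcc a b ⊆ Icc 0 t →
      IntervalIntegrable (fun s => stdKernel β (t - s) * F' s) volume a b := by
    intro a b hab
    exact (kernel_comp_sub_intervalIntegrable hβ0 t a b).mul_continuousOn (hF'c.mono hab)
  set C : ℝ := M / Real.Gamma β + M / (β * Real.Gamma β) with hC
  have key : ∀ ε ∈ Ioo (0:ℝ) t,
      -(C * ε ^ β) ≤ ∫ s in (0:ℝ)..t, stdKernel β (t - s) * F' s := by
    intro ε hε
    have hεt : 0 ≤ t - ε := by linarith [hε.2]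
    have hsub1 : Icc (0:ℝ) (t - ε) ⊆ Icc 0 t := Icc_subset_Icc le_rfl (by linarith [hε.1])
    have huIcc1 : ([[ (0:ℝ), t - ε ]] : Set ℝ) = Icc 0 (t - ε) := uIcc_of_le hεt
    -- split
    have hsplit := intervalIntegral.integral_add_adjacent_intervals
      (hInt 0 (t - ε) (huIcc1 ▸ hsub1))
      (hInt (t - ε) t (by
        rw [uIcc_of_le (show t - ε ≤ t by linarith [hε.1])]
        exact Icc_subset_Icc hεt le_rfl))
    rw [← hsplit]
    -- Term B bound
    have hTermB : -(M * (ε ^ β / (β * Real.Gamma β))) ≤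
        ∫ s in (t - ε)..t, stdKernel β (t - s) * F' s := by
      have hmono : ∀ s ∈ Icc (t - ε) t, -(stdKernel β (t - s) * M) ≤ stdKernel β (t - s) * F' s := by
        intro s hs
        have hg : 0 ≤ stdKernel β (t - s) := kernel_nonneg hβ0 (by linarith [hs.2])
        have hFs : |F' s| ≤ M := by
          simpa [Real.norm_eq_abs] using hM s ⟨by linarith [hs.1, hε.2], hs.2⟩
        have h2 : -M ≤ F' s := (abs_le.mp hFs).1
        nlinarith [mul_le_mul_of_nonneg_left h2 hg]
      have h1 := intervalIntegral.integral_mono_on (show t - ε ≤ t by linarith [hε.1])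
        (((kernel_comp_sub_intervalIntegrable hβ0 t (t-ε) t).mul_const M).neg)
        (hInt (t - ε) t (by
          rw [uIcc_of_le (show t - ε ≤ t by linarith [hε.1])]
          exact Icc_subset_Icc hεt le_rfl)) hmono
      have hval : ∫ s in (t-ε)..t, stdKernel β (t - s) = ε ^ β / (β * Real.Gamma β) := by
        rw [intervalIntegral.integral_comp_sub_left (stdKernel β) t]
        simpa using kernel_integral hβ0 ε
      refine le_trans (le_of_eq ?_) h1
      simp only [Pi.neg_apply]
      rw [intervalIntegral.integral_neg, intervalIntegral.integral_mul_const, hval]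
      ring
    -- Term A : integration by parts
    have hTermA : -(M * (ε ^ β / Real.Gamma β)) ≤
        ∫ s in (0:ℝ)..(t - ε), stdKernel β (t - s) * F' s := by
      set U' : ℝ → ℝ := fun s => (1 - β) * (t - s) ^ (β - 2) / Real.Gamma β with hU'def
      have hU : ∀ x ∈ ([[ (0:ℝ), t - ε ]] : Set ℝ),
          HasDerivWithinAt (fun s => stdKernel β (t - s)) (U' x) ([[ (0:ℝ), t - ε ]]) x := by
        intro x hx
        rw [huIcc1] at hx
        have hpos : 0 < t - x := by linarith [hx.2, hε.1]
        have h1 : HasDerivAt (fun s : ℝ => t - s) (-1) x := (hasDerivAt_id x).const_sub t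
        have h2 := h1.rpow_const (p := β - 1) (Or.inl hpos.ne')
        have h3 := h2.div_const (Real.Gamma β)
        have : (-1) * (β - 1) * (t - x) ^ (β - 1 - 1) / Real.Gamma β = U' x := by
          rw [hU'def]
          have : β - 1 - 1 = β - 2 := by ring
          rw [this]; ring
        rw [this] at h3
        exact h3.hasDerivWithinAt
      have hV : ∀ x ∈ ([[ (0:ℝ), t - ε ]] : Set ℝ),
          HasDerivWithinAt F (F' x) ([[ (0:ℝ), t - ε ]]) x := by
        intro x hx
        rw [huIcc1] at hx
        exact (hF x (hsub1 hx)).mono (by rw [huIcc1]; exact hsub1)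
      have hU'int : IntervalIntegrable U' volume 0 (t - ε) := by
        apply ContinuousOn.intervalIntegrable
        apply ContinuousOn.div_const
        apply ContinuousOn.mul continuousOn_const
        apply ContinuousOn.rpow_const ((continuous_const.sub continuous_id).continuousOn)
        intro x hx
        rw [huIcc1] at hx
        exact Or.inl (by simp; intro h; linarith [hx.2, hε.1])
      have hV'int : IntervalIntegrable F' volume 0 (t - ε) := by
        apply ContinuousOn.intervalIntegrable
        exact hF'c.mono (by rw [huIcc1]; exact hsub1)
      have hibp := intervalIntegral.integral_mul_deriv_eq_deriv_mul_of_hasDerivWithinAt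
        hU hV hU'int hV'int
      rw [hibp]
      have e1 : t - (t - ε) = ε := by ring
      -- bound each of the three terms
      have hb2 : 0 ≤ -(stdKernel β (t - 0) * F 0) := by
        have := hFle 0 ⟨le_rfl, ht.le⟩
        nlinarith [kernel_nonneg hβ0 (show (0:ℝ) ≤ t - 0 by linarith)]
      have hb3 : ∫ x in (0:ℝ)..(t - ε), U' x * F x ≤ 0 := by
        have : 0 ≤ ∫ x in (0:ℝ)..(t - ε), -(U' x * F x) := by
          apply intervalIntegral.integral_nonneg hεt
          intro s hs
          have hU'nn : 0 ≤ U' s := by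
            apply div_nonneg _ hΓ.le
            exact mul_nonneg (by linarith) (Real.rpow_nonneg (by linarith [hs.2, hε.1]) _)
          have hFnp : F s ≤ 0 := hFle s (hsub1 hs)
          nlinarith
        rw [intervalIntegral.integral_neg] at this
        linarith
      have hb1 : -(M * (ε ^ β / Real.Gamma β)) ≤ stdKernel β (t - (t - ε)) * F (t - ε) := by
        rw [e1]
        have hfb : ‖F (t - ε) - F t‖ ≤ M * ‖(t - ε) - t‖ :=
          (convex_Icc (0:ℝ) t).norm_image_sub_le_of_norm_hasDerivWithin_le hF hM
            ⟨ht.le, le_rfl⟩ ⟨hεt, by linarith [hε.1]⟩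
        rw [hFt, sub_zero] at hfb
        have : |F (t - ε)| ≤ M * ε := by
          simpa [Real.norm_eq_abs, abs_of_nonneg hε.1.le, abs_sub_comm] using hfb
        have hFlb : -(M * ε) ≤ F (t - ε) := (abs_le.mp this).1
        have hg : 0 ≤ stdKernel β ε := kernel_nonneg hβ0 hε.1.le
        have hgε : stdKernel β ε * ε = ε ^ β / Real.Gamma β := by
          unfold stdKernel
          rw [div_mul_eq_mul_div]
          congr 1
          rw [← Real.rpow_add_one hε.1.ne' (β - 1)]
          congr 1; ring
        calc -(M * (ε ^ β / Real.Gamma β)) = stdKernel β ε * -(M * ε) := by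
              rw [← hgε]; ring
        _ ≤ stdKernel β ε * F (t - ε) := mul_le_mul_of_nonneg_left hFlb hg
      linarith [hb1, hb2, hb3]
    have heq : -(C * ε ^ β) = -(M * (ε ^ β / Real.Gamma β)) + -(M * (ε ^ β / (β * Real.Gamma β))) := by
      rw [hC]; ring
    rw [heq]
    exact add_le_add hTermA hTermB
  -- take the limit ε → 0⁺
  have h0 : Filter.Tendsto (fun ε : ℝ => ε ^ β) (nhdsWithin 0 (Ioi 0)) (nhds 0) := by
    have := (Real.continuousAt_rpow_const 0 β (Or.inr hβ0.le)).tendsto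
    rw [Real.zero_rpow hβ0.ne'] at this
    exact this.mono_left nhdsWithin_le_nhds
  have htend : Filter.Tendsto (fun ε : ℝ => -(C * ε ^ β)) (nhdsWithin 0 (Ioi 0)) (nhds 0) := by
    have := (h0.const_mul C).neg
    simpa using this
  refine le_of_tendsto htend ?_
  filter_upwards [Ioo_mem_nhdsGT_of_mem (show (0:ℝ) ∈ Ico 0 t by constructor <;> simp [ht])] with ε hε
  exact key ε hε

end CaputoAux

open CaputoAux

/-- **Convexity inequality for the Caputo fractional derivative**: for
`u ∈ C¹([0,T];ℝ)` and convex `H ∈ C¹(ℝ)`, for every `t ∈ (0,T]` the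
Riemann-Liouville derivatives `∂ₜᵅ(u - u(0))(t)` and `∂ₜᵅ(H(u) - H(u(0)))(t)`
exist (as derivatives of `g_{1-α} ∗ (u - u(0))` and `g_{1-α} ∗ (H(u) - H(u(0)))`
within `[0,T]`) and satisfy `H'(u(t)) ∂ₜᵅ(u - u(0))(t) ≥ ∂ₜᵅ(H(u) - H(u(0)))(t)`. -/
theorem caputo_convexity_inequality
    (α T : ℝ) (hα : α ∈ Ioo (0:ℝ) 1) (hT : 0 < T)
    (u u' : ℝ → ℝ)
    (hu : ∀ t ∈ Icc 0 T, HasDerivWithinAt u (u' t) (Icc 0 T) t)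
    (hu'cont : ContinuousOn u' (Icc 0 T))
    (H H' : ℝ → ℝ)
    (hH : ∀ x : ℝ, HasDerivAt H (H' x) x)
    (hH'cont : Continuous H')
    (hHconvex : ConvexOn ℝ univ H) :
    ∀ t ∈ Ioc 0 T, ∃ Du DH : ℝ,
      HasDerivWithinAt (fun τ => ∫ s in (0:ℝ)..τ, stdKernel (1 - α) (τ - s) * (u s - u 0))
        Du (Icc 0 T) t ∧
      HasDerivWithinAt
        (fun τ => ∫ s in (0:ℝ)..τ, stdKernel (1 - α) (τ - s) * (H (u s) - H (u 0)))
        DH (Icc 0 T) t ∧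
      H' (u t) * Du ≥ DH := by
  intro t ht
  have hβ0 : 0 < 1 - α := by linarith [hα.2]
  have htmem : t ∈ Icc (0:ℝ) T := ⟨ht.1.le, ht.2⟩
  have hsubt : Icc (0:ℝ) t ⊆ Icc 0 T := Icc_subset_Icc le_rfl ht.2
  have hucont : ContinuousOn u (Icc 0 T) := fun x hx => (hu x hx).continuousWithinAt
  have hHcont : Continuous H := continuous_iff_continuousAt.mpr fun x => (hH x).continuousAt
  -- clamping map
  set π : ℝ → ℝ := fun s => max 0 (min s T) with hπ
  have hπcont : Continuous π := continuous_const.max (continuous_id.min continuous_const)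
  have hπmaps : ∀ s, π s ∈ Icc (0:ℝ) T := fun s =>
    ⟨le_max_left _ _, max_le hT.le (min_le_right _ _)⟩
  have hπid : ∀ s ∈ Icc (0:ℝ) T, π s = s := by
    intro s hs
    simp only [hπ]
    rw [min_eq_left hs.2, max_eq_right hs.1]
  set v₁ : ℝ → ℝ := fun s => u' (π s) with hv₁
  set v₂ : ℝ → ℝ := fun s => H' (u (π s)) * u' (π s) with hv₂
  have hv₁c : Continuous v₁ := hu'cont.comp_continuous hπcont hπmaps
  have hv₂c : Continuous v₂ := by
    have h1 : Continuous fun s => u (π s) := hucont.comp_continuous hπcont hπmaps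
    exact (hH'cont.comp h1).mul hv₁c
  -- FTC identities
  have hFTCu : ∀ s ∈ Icc (0:ℝ) T, ∫ r in (0:ℝ)..s, v₁ r = u s - u 0 := by
    intro s hs
    have h1 : ∫ r in (0:ℝ)..s, v₁ r = ∫ r in (0:ℝ)..s, u' r := by
      apply intervalIntegral.integral_congr
      intro r hr
      rw [uIcc_of_le hs.1] at hr
      simp only [hv₁, hπid r (Icc_subset_Icc le_rfl hs.2 hr)]
    rw [h1]
    refine intervalIntegral.integral_eq_sub_of_hasDeriv_right_of_le hs.1
      (hucont.mono (Icc_subset_Icc le_rfl hs.2)) (fun x hx => ?_)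
      ((hu'cont.mono (by rw [uIcc_of_le hs.1]; exact Icc_subset_Icc le_rfl hs.2)).intervalIntegrable)
    have hxT : x ∈ Icc (0:ℝ) T := ⟨hx.1.le, le_trans hx.2.le hs.2⟩
    exact (((hu x hxT).hasDerivAt
      (Icc_mem_nhds hx.1 (lt_of_lt_of_le hx.2 hs.2))).hasDerivWithinAt)
  have hFTCH : ∀ s ∈ Icc (0:ℝ) T, ∫ r in (0:ℝ)..s, v₂ r = H (u s) - H (u 0) := by
    intro s hs
    have h1 : ∫ r in (0:ℝ)..s, v₂ r = ∫ r in (0:ℝ)..s, H' (u r) * u' r := by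
      apply intervalIntegral.integral_congr
      intro r hr
      rw [uIcc_of_le hs.1] at hr
      simp only [hv₂, hπid r (Icc_subset_Icc le_rfl hs.2 hr)]
    rw [h1]
    refine intervalIntegral.integral_eq_sub_of_hasDeriv_right_of_le hs.1
      ((hHcont.comp_continuousOn (hucont.mono (Icc_subset_Icc le_rfl hs.2)))) (fun x hx => ?_)
      ((((hH'cont.comp_continuousOn hucont).mul hu'cont).mono
        (by rw [uIcc_of_le hs.1]; exact Icc_subset_Icc le_rfl hs.2)).intervalIntegrable)
    have hxT : x ∈ Icc (0:ℝ) T := ⟨hx.1.le, le_trans hx.2.le hs.2⟩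
    have hud : HasDerivAt u (u' x) x :=
      (hu x hxT).hasDerivAt (Icc_mem_nhds hx.1 (lt_of_lt_of_le hx.2 hs.2))
    exact ((hH (u x)).comp x hud).hasDerivWithinAt
  -- derivatives exist
  have heq1 : ∀ τ ∈ Icc (0:ℝ) T,
      (∫ s in (0:ℝ)..τ, stdKernel (1 - α) (τ - s) * (u s - u 0))
      = ∫ s in (0:ℝ)..τ, stdKernel (1 - α) (τ - s) * ∫ r in (0:ℝ)..s, v₁ r := by
    intro τ hτ
    apply intervalIntegral.integral_congr
    intro s hs
    rw [uIcc_of_le hτ.1] at hs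
    simp only [hFTCu s (Icc_subset_Icc le_rfl hτ.2 hs)]
  have heq2 : ∀ τ ∈ Icc (0:ℝ) T,
      (∫ s in (0:ℝ)..τ, stdKernel (1 - α) (τ - s) * (H (u s) - H (u 0)))
      = ∫ s in (0:ℝ)..τ, stdKernel (1 - α) (τ - s) * ∫ r in (0:ℝ)..s, v₂ r := by
    intro τ hτ
    apply intervalIntegral.integral_congr
    intro s hs
    rw [uIcc_of_le hτ.1] at hs
    simp only [hFTCH s (Icc_subset_Icc le_rfl hτ.2 hs)]
  have hDu : HasDerivWithinAt
      (fun τ => ∫ s in (0:ℝ)..τ, stdKernel (1 - α) (τ - s) * (u s - u 0))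
      (∫ s in (0:ℝ)..t, stdKernel (1 - α) (t - s) * v₁ s) (Icc 0 T) t :=
    (lemA hβ0 hT v₁ hv₁c ht).congr heq1 (heq1 t htmem)
  have hDH : HasDerivWithinAt
      (fun τ => ∫ s in (0:ℝ)..τ, stdKernel (1 - α) (τ - s) * (H (u s) - H (u 0)))
      (∫ s in (0:ℝ)..t, stdKernel (1 - α) (t - s) * v₂ s) (Icc 0 T) t :=
    (lemA hβ0 hT v₂ hv₂c ht).congr heq2 (heq2 t htmem)
  refine ⟨_, _, hDu, hDH, ?_⟩
  -- the convexity inequality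
  set F : ℝ → ℝ := fun s => H (u t) - H (u s) - H' (u t) * (u t - u s) with hF
  set G : ℝ → ℝ := fun s => (H' (u t) - H' (u s)) * u' s with hG
  have hFd : ∀ s ∈ Icc (0:ℝ) t, HasDerivWithinAt F (G s) (Icc 0 t) s := by
    intro s hs
    have hus : HasDerivWithinAt u (u' s) (Icc 0 t) s := (hu s (hsubt hs)).mono hsubt
    have hHus : HasDerivWithinAt (fun y => H (u y)) (H' (u s) * u' s) (Icc 0 t) s :=
      (hH (u s)).comp_hasDerivWithinAt s hus
    have hcomb := (hHus.const_sub (H (u t))).sub ((hus.const_sub (u t)).const_mul (H' (u t)))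
    convert hcomb using 1
    · rfl
    · rfl
    show (H' (u t) - H' (u s)) * u' s = _
    ring
    rfl
  have hGc : ContinuousOn G (Icc 0 t) := by
    apply ContinuousOn.mul _ (hu'cont.mono hsubt)
    exact continuousOn_const.sub (hH'cont.comp_continuousOn (hucont.mono hsubt))
  have hFle : ∀ s ∈ Icc (0:ℝ) t, F s ≤ 0 := by
    intro s hs
    simp only [hF]
    rcases lt_trichotomy (u s) (u t) with hlt | heq | hgt
    · have hsl := hHconvex.slope_le_of_hasDerivAt (mem_univ (u s)) (mem_univ (u t)) hlt (hH (u t))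
      rw [slope_def_field] at hsl
      have hd : 0 < u t - u s := sub_pos.mpr hlt
      rw [div_le_iff₀ hd] at hsl
      nlinarith
    · rw [heq]; simp
    · have hsl := hHconvex.le_slope_of_hasDerivAt (mem_univ (u t)) (mem_univ (u s)) hgt (hH (u t))
      rw [slope_def_field] at hsl
      have hd : 0 < u s - u t := sub_pos.mpr hgt
      rw [le_div_iff₀ hd] at hsl
      nlinarith
  have hFt : F t = 0 := by simp only [hF]; ring
  have hpos := key_pos α t hα ht.1 F G hFd hGc hFle hFt
  -- rewrite the two derivative values with the unclamped integrands
  have hDuval : (∫ s in (0:ℝ)..t, stdKernel (1 - α) (t - s) * v₁ s)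
      = ∫ s in (0:ℝ)..t, stdKernel (1 - α) (t - s) * u' s := by
    apply intervalIntegral.integral_congr
    intro s hs
    rw [uIcc_of_le ht.1.le] at hs
    simp only [hv₁, hπid s (hsubt hs)]
  have hDHval : (∫ s in (0:ℝ)..t, stdKernel (1 - α) (t - s) * v₂ s)
      = ∫ s in (0:ℝ)..t, stdKernel (1 - α) (t - s) * (H' (u s) * u' s) := by
    apply intervalIntegral.integral_congr
    intro s hs
    rw [uIcc_of_le ht.1.le] at hs
    simp only [hv₂, hπid s (hsubt hs)]
  rw [ge_iff_le, hDuval, hDHval]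
  have hkint : IntervalIntegrable (fun s => stdKernel (1 - α) (t - s)) volume 0 t :=
    kernel_comp_sub_intervalIntegrable hβ0 t 0 t
  have huIt : ([[ (0:ℝ), t ]] : Set ℝ) ⊆ Icc 0 T := by
    rw [uIcc_of_le ht.1.le]; exact hsubt
  have hi1 : IntervalIntegrable (fun s => stdKernel (1 - α) (t - s) * u' s) volume 0 t :=
    hkint.mul_continuousOn (hu'cont.mono huIt)
  have hi2 : IntervalIntegrable
      (fun s => stdKernel (1 - α) (t - s) * (H' (u s) * u' s)) volume 0 t :=
    hkint.mul_continuousOn (((hH'cont.comp_continuousOn hucont).mul hu'cont).mono huIt)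
  have hsplit : H' (u t) * (∫ s in (0:ℝ)..t, stdKernel (1 - α) (t - s) * u' s)
      - (∫ s in (0:ℝ)..t, stdKernel (1 - α) (t - s) * (H' (u s) * u' s))
      = ∫ s in (0:ℝ)..t, stdKernel (1 - α) (t - s) * G s := by
    rw [← intervalIntegral.integral_const_mul,
      ← intervalIntegral.integral_sub (hi1.const_mul _) hi2]
    apply intervalIntegral.integral_congr
    intro s _
    simp only [hG]
    ring
  linarith [hpos, hsplit]
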